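/- Let A be an independent set of a simple graph G such that N_G(A) is a vertex cover of G, and let X_A denote the product of the variables corresponding to vertices of A. Then the ideal quotient (I(G) : X_A) equals the prime monomial ideal generated by the variables in N_G(A). -/

import Mathlib

open MvPolynomial

namespace PaperRV

variable {V : Type*}

/-- `A` is an independent set of `G`. -/
def IsIndep (G : SimpleGraph V) (A : Set V) : Prop :=
  ∀ u ∈ A, ∀ v ∈ A, ¬ G.Adj u v

/-- The neighbourhood `N_G(A)` of a set of vertices `A`. -/
def nbhd (G : SimpleGraph V) (A : Set V) : Set V :=
  {v | ∃ u ∈ A, G.Adj u v}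

/-- `C` is a vertex cover of `G`. -/
def IsVertexCover (G : SimpleGraph V) (C : Set V) : Prop :=
  ∀ ⦃u v⦄, G.Adj u v → u ∈ C ∨ v ∈ C

/-- The edge ideal `I(G) = ⟨x_u x_v : {u,v} ∈ E(G)⟩` of `G` in `K[x_v : v ∈ V]`. -/
noncomputable def edgeIdeal (K : Type*) [Field K] (G : SimpleGraph V) : Ideal (MvPolynomial V K) :=
  Ideal.span {q | ∃ u v, G.Adj u v ∧ q = X u * X v}

/-- If `A` is an independent set of `G` with `N_G(A)` a vertex cover of `G`, then
`(I(G) : X_A) = ⟨x_v : v ∈ N_G(A)⟩`, a prime monomial ideal. -/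
theorem stmt18 {V : Type*} (K : Type*) [Field K] (G : SimpleGraph V) (A : Finset V)
    (hA : IsIndep G ↑A) (hcov : IsVertexCover G (nbhd G ↑A)) :
    Submodule.colon (edgeIdeal K G) (Ideal.span {∏ v ∈ A, (X v : MvPolynomial V K)}) =
      Ideal.span (MvPolynomial.X '' (nbhd G ↑A)) ∧
    (Ideal.span (MvPolynomial.X '' (nbhd G ↑A)) : Ideal (MvPolynomial V K)).IsPrime := by
  classical
  set N : Set V := nbhd G (↑A : Set V) with hNdef
  set P : Ideal (MvPolynomial V K) := Ideal.span (X '' N) with hPdef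
  set φ : MvPolynomial V K →ₐ[K] MvPolynomial V K :=
    aeval (fun v => if v ∈ N then 0 else X v) with hφdef
  have hφX0 : ∀ v ∈ N, φ (X v) = 0 := by
    intro v hv; simp [hφdef, aeval_X, if_pos hv]
  have hφX1 : ∀ v ∉ N, φ (X v) = X v := by
    intro v hv; simp [hφdef, aeval_X, if_neg hv]
  have hXmem : ∀ v ∈ N, (X v : MvPolynomial V K) ∈ P :=
    fun v hv => Ideal.subset_span ⟨v, hv, rfl⟩
  -- key: f - φ f ∈ P for all f
  have hdiff : ∀ f : MvPolynomial V K, f - φ f ∈ P := by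
    intro f
    induction f using MvPolynomial.induction_on with
    | C a => simp [hφdef]
    | add p q hp hq =>
        rw [map_add, add_sub_add_comm]
        exact P.add_mem hp hq
    | mul_X p v hp =>
        rw [map_mul]
        by_cases hv : v ∈ N
        · rw [hφX0 v hv, mul_zero, sub_zero]
          exact P.mul_mem_left p (hXmem v hv)
        · rw [hφX1 v hv, ← sub_mul]
          exact P.mul_mem_right _ hp
  have hker : ∀ f : MvPolynomial V K, f ∈ P ↔ φ f = 0 := by
    intro f
    constructor
    · intro hf
      refine Submodule.span_induction ?_ ?_ ?_ ?_ hf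
      · rintro q ⟨v, hv, rfl⟩; exact hφX0 v hv
      · simp
      · intro a b _ _ ha hb; rw [map_add, ha, hb, add_zero]
      · intro r a _ ha; rw [smul_eq_mul, map_mul, ha, mul_zero]
    · intro hf
      have := hdiff f
      rwa [hf, sub_zero] at this
  have hprime : P.IsPrime := by
    constructor
    · intro h
      have h1 : (1 : MvPolynomial V K) ∈ P := h ▸ Submodule.mem_top
      have := (hker 1).mp h1
      simp at this
    · intro a b hab
      have := (hker _).mp hab
      rw [map_mul] at this
      rcases mul_eq_zero.mp this with h | h
      · exact Or.inl ((hker a).mpr h)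
      · exact Or.inr ((hker b).mpr h)
  -- A is disjoint from N
  have hAN : ∀ v ∈ A, v ∉ N := by
    intro v hv ⟨u, hu, hadj⟩
    exact hA u hu v hv hadj
  -- edge ideal is contained in P
  have hIP : edgeIdeal K G ≤ P := by
    rw [edgeIdeal, Ideal.span_le]
    rintro q ⟨u, v, hadj, rfl⟩
    rcases hcov hadj with h | h
    · exact P.mul_mem_right _ (hXmem u h)
    · exact P.mul_mem_left _ (hXmem v h)
  refine ⟨le_antisymm ?_ ?_, hprime⟩
  · intro f hf
    have hfX : f * ∏ v ∈ A, (X v : MvPolynomial V K) ∈ edgeIdeal K G :=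
      Ideal.mem_colon_span_singleton.mp hf
    have hfP : φ (f * ∏ v ∈ A, (X v : MvPolynomial V K)) = 0 :=
      (hker _).mp (hIP hfX)
    rw [map_mul, map_prod] at hfP
    have hprodne : (∏ v ∈ A, φ (X v : MvPolynomial V K)) ≠ 0 := by
      rw [Finset.prod_ne_zero_iff]
      intro v hv
      rw [hφX1 v (hAN v hv)]
      exact X_ne_zero v
    rcases mul_eq_zero.mp hfP with h | h
    · exact (hker f).mpr h
    · exact absurd h hprodne
  · rw [Ideal.span_le]
    rintro q ⟨v, hv, rfl⟩
    refine Ideal.mem_colon_span_singleton.mpr ?_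
    obtain ⟨u, hu, hadj⟩ := hv
    have key : (X v : MvPolynomial V K) * ∏ w ∈ A, X w
        = (X u * X v) * ∏ w ∈ A.erase u, X w := by
      rw [← Finset.mul_prod_erase A _ hu]; ring
    rw [key]
    exact Ideal.mul_mem_right _ _ (Ideal.subset_span ⟨u, v, hadj, rfl⟩)

end PaperRV
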